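/- Let M = x_0^{a_0} x_1^{a_1} ⋯ x_n^{a_n} be a monomial with 0 < a_0 ≤ a_1 ≤ ⋯ ≤ a_n and total degree d = a_0 + ⋯ + a_n. Then the real Waring rank of M satisfies rk_ℝ(M) ≤ (1/(2a_0)) · ∏_{i=0}^{n} (a_i + a_0). -/

import Mathlib

section AuxPolyNodes
open Polynomial Finset

lemma sign_coeff_prod {ι : Type*} [DecidableEq ι] (s : Finset ι) (r : ι → ℝ)
    (hr : ∀ i ∈ s, 0 < r i) :
    ∀ j ≤ s.card, 0 < (-1 : ℝ)^(s.card - j) * (∏ i ∈ s, (X - C (r i))).coeff j := by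
  induction s using Finset.cons_induction with
  | empty =>
    intro j hj
    obtain rfl : j = 0 := Nat.le_zero.mp hj
    simp
  | cons i s his ih =>
    intro j hj
    have hQdeg : (∏ i ∈ s, (X - C (r i))).natDegree = s.card := by
      rw [Polynomial.natDegree_prod_of_monic _ _ fun i _ => monic_X_sub_C _]
      simp
    have hri : 0 < r i := hr i (mem_cons_self i s)
    have hrs : ∀ i ∈ s, 0 < r i := fun j hj => hr j (mem_cons_of_mem hj)
    rw [prod_cons, sub_mul, coeff_sub]
    rw [card_cons] at hj ⊢
    set Q := ∏ i ∈ s, (X - C (r i)) with hQ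
    match j with
    | 0 =>
      have h0 := ih hrs 0 (Nat.zero_le _)
      rw [mul_coeff_zero, coeff_X_zero, zero_mul, coeff_C_mul, zero_sub, Nat.sub_zero] at *
      rw [pow_succ]
      nlinarith [mul_pos h0 hri]
    | (m+1) =>
      rw [coeff_X_mul, coeff_C_mul]
      have hm : m ≤ s.card := by omega
      have h1 := ih hrs m hm
      have hsub : s.card + 1 - (m + 1) = s.card - m := by omega
      rw [hsub]
      rcases eq_or_lt_of_le hm with h | h
      · have hz : Q.coeff (m+1) = 0 := by
          apply coeff_eq_zero_of_natDegree_lt; omega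
        rw [hz]; simpa using h1
      · have h2 := ih hrs (m+1) (by omega)
        have hsub2 : s.card - m = (s.card - (m+1)) + 1 := by omega
        rw [hsub2] at h1 ⊢
        rw [pow_succ] at h1 ⊢
        nlinarith [mul_pos h2 hri]

lemma exists_nodes (N m : ℕ) (h1 : 1 ≤ m) (h2 : m < N) :
    ∃ t : Fin N → ℝ, Function.Injective t ∧ (∏ k, (X - C (t k))).coeff m = 0 := by
  obtain ⟨N', rfl⟩ : ∃ N', N = N' + 1 := ⟨N - 1, by omega⟩
  obtain ⟨m', rfl⟩ : ∃ m', m = m' + 1 := ⟨m - 1, by omega⟩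
  set Q := ∏ k : Fin N', (X - C ((k : ℝ) + 1)) with hQdef
  have hcard : (univ : Finset (Fin N')).card = N' := by simp
  have hsign := sign_coeff_prod (univ : Finset (Fin N')) (fun k => (k : ℝ) + 1)
    (fun i _ => by positivity)
  rw [hcard] at hsign
  have hm : m' + 1 ≤ N' := by omega
  have hQm := hsign (m' + 1) hm
  have hQm1 := hsign m' (by omega)
  have hQmne : Q.coeff (m' + 1) ≠ 0 := by
    intro h; rw [h, mul_zero] at hQm; exact lt_irrefl 0 hQm
  set u := Q.coeff m' / Q.coeff (m' + 1) with hu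
  have hsigns : (-1 : ℝ) ^ (N' - m') * (-1) ^ (N' - (m' + 1)) = -1 := by
    rw [← pow_add]
    have : N' - m' + (N' - (m' + 1)) = 2 * (N' - (m' + 1)) + 1 := by omega
    rw [this, pow_succ, pow_mul]
    norm_num
  have hprodneg : Q.coeff m' * Q.coeff (m' + 1) < 0 := by
    have := mul_pos hQm1 hQm
    nlinarith
  have huneg : u < 0 := by
    have h2 : u = Q.coeff m' * Q.coeff (m' + 1) / (Q.coeff (m' + 1)) ^ 2 := by
      rw [hu, pow_two, mul_div_mul_right _ _ hQmne]
    rw [h2]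
    exact div_neg_of_neg_of_pos hprodneg (by positivity)
  refine ⟨Fin.cases u (fun k => (k : ℝ) + 1), ?_, ?_⟩
  · intro x y hxy
    induction x using Fin.cases with
    | zero => induction y using Fin.cases with
      | zero => rfl
      | succ k =>
        simp only [Fin.cases_zero, Fin.cases_succ] at hxy
        have : (0:ℝ) ≤ (k : ℕ) := Nat.cast_nonneg _
        linarith
    | succ k => induction y using Fin.cases with
      | zero =>
        simp only [Fin.cases_zero, Fin.cases_succ] at hxy
        have : (0:ℝ) ≤ (k : ℕ) := Nat.cast_nonneg _
        linarith
      | succ l =>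
        simp only [Fin.cases_succ] at hxy
        have : (k : Fin N') = l := by
          have : ((k : ℕ) : ℝ) = ((l : ℕ) : ℝ) := by linarith
          exact Fin.ext (Nat.cast_inj.mp this)
        rw [this]
  · rw [Fin.prod_univ_succ]
    simp only [Fin.cases_zero, Fin.cases_succ]
    rw [← hQdef, sub_mul, coeff_sub, coeff_X_mul, coeff_C_mul]
    rw [hu, div_mul_cancel₀ _ hQmne, sub_self]

lemma exists_weights (N m : ℕ) (h1 : 1 ≤ m) (h2 : m < N) :
    ∃ (t w : Fin N → ℝ), Function.Injective t ∧
      ∀ j ≤ N, ∑ k, w k * t k ^ j = if j = m then 1 else 0 := by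
  obtain ⟨t, htinj, hcoeff⟩ := exists_nodes N m h1 h2
  set w : Fin N → ℝ := fun k => (Lagrange.basis univ t k).coeff m with hw
  have hinjOn : Set.InjOn t (univ : Finset (Fin N)) := fun x _ y _ h => htinj h
  have key : ∀ f : ℝ[X], f.degree < (N : WithBot ℕ) →
      ∑ k, w k * f.eval (t k) = f.coeff m := by
    intro f hf
    have hfi := Lagrange.eq_interpolate hinjOn
      (by rw [card_univ, Fintype.card_fin]; exact hf)
    conv_rhs => rw [hfi]
    rw [Lagrange.interpolate_apply, finset_sum_coeff]
    exact Finset.sum_congr rfl fun k _ => by rw [coeff_C_mul]; ring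
  refine ⟨t, w, htinj, ?_⟩
  intro j hj
  rcases Nat.lt_or_ge j N with hjN | hjN
  · have hk := key (X ^ j) (by rw [degree_X_pow]; exact_mod_cast hjN)
    simp only [eval_pow, eval_X, coeff_X_pow] at hk
    rw [hk]
    simp [eq_comm]
  · have hjeq : j = N := le_antisymm hj hjN
    subst hjeq
    set P := ∏ k, (X - C (t k)) with hP
    have hPmonic : P.Monic := monic_prod_of_monic _ _ fun k _ => monic_X_sub_C _
    have hPdeg : P.natDegree = j := by
      rw [hP, Polynomial.natDegree_prod_of_monic _ _ fun k _ => monic_X_sub_C _]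
      simp
    have hPdeg' : P.degree = (j : WithBot ℕ) := by
      rw [Polynomial.degree_eq_natDegree hPmonic.ne_zero, hPdeg]
    have hdlt : (X ^ j - P).degree < (j : WithBot ℕ) := by
      have := Polynomial.degree_sub_lt (p := (X : ℝ[X]) ^ j) (q := P)
        (by rw [degree_X_pow, hPdeg']) (by exact pow_ne_zero _ X_ne_zero)
        (by rw [leadingCoeff_X_pow, hPmonic.leadingCoeff])
      rwa [degree_X_pow] at this
    have hk := key (X ^ j - P) hdlt
    have heval : ∀ k, eval (t k) ((X : ℝ[X]) ^ j - P) = t k ^ j := by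
      intro k
      have : eval (t k) P = 0 := by
        rw [hP, eval_prod]
        exact Finset.prod_eq_zero (mem_univ k) (by simp)
      simp [this]
    rw [if_neg (by omega)]
    calc ∑ k, w k * t k ^ j = ∑ k, w k * eval (t k) ((X : ℝ[X]) ^ j - P) := by
          exact Finset.sum_congr rfl fun k _ => by rw [heval]
      _ = ((X : ℝ[X]) ^ j - P).coeff m := hk
      _ = 0 := by rw [coeff_sub, coeff_X_pow, hcoeff, if_neg (by omega), sub_zero]

end AuxPolyNodes

section AuxKeyIdentity
open MvPolynomial Finset

lemma key_identity (n : ℕ) (a : Fin (n + 1) → ℕ)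
    (t w : ∀ i : Fin n, Fin (a 0 + a i.succ) → ℝ)
    (hw : ∀ i, ∀ j ≤ a 0 + a i.succ,
      ∑ k, w i k * t i k ^ j = if j = a i.succ then 1 else 0) :
    ∑ k : (∀ i : Fin n, Fin (a 0 + a i.succ)), C (∏ j, w j (k j)) *
      (∑ j : Fin (n + 1), C ((Fin.cases 1 fun j' => t j' (k j') : Fin (n + 1) → ℝ) j) * X j)
        ^ (∑ i, a i)
      = C ((Nat.multinomial univ a : ℝ)) *
        ∏ i : Fin (n + 1), (X i : MvPolynomial (Fin (n + 1)) ℝ) ^ a i := by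
  classical
  have expand : ∀ k : (∀ i : Fin n, Fin (a 0 + a i.succ)),
      (∑ j : Fin (n + 1), C ((Fin.cases 1 fun j' => t j' (k j') : Fin (n + 1) → ℝ) j) * X j)
        ^ (∑ i, a i)
      = ∑ b ∈ Finset.piAntidiag univ (∑ i, a i),
          (Nat.multinomial univ b : MvPolynomial (Fin (n + 1)) ℝ) *
          (C (∏ j : Fin n, t j (k j) ^ b j.succ) * ∏ j : Fin (n + 1), X j ^ b j) := by
    intro k
    rw [Finset.sum_pow_eq_sum_piAntidiag]
    refine Finset.sum_congr rfl fun b hb => ?_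
    congr 1
    have hgen : ∀ F : Fin (n + 1) → ℝ, ∏ j : Fin (n + 1), (C (F j) * X j) ^ b j
        = C (∏ j : Fin (n + 1), F j ^ b j) * ∏ j : Fin (n + 1), X j ^ b j := by
      intro F
      simp only [mul_pow, ← C_pow]
      rw [Finset.prod_mul_distrib, ← map_prod]
    rw [hgen]
    congr 2
    rw [Fin.prod_univ_succ]
    simp
  calc ∑ k : (∀ i : Fin n, Fin (a 0 + a i.succ)), C (∏ j, w j (k j)) *
        (∑ j : Fin (n + 1), C ((Fin.cases 1 fun j' => t j' (k j') : Fin (n + 1) → ℝ) j) * X j)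
          ^ (∑ i, a i)
      = ∑ k : (∀ i : Fin n, Fin (a 0 + a i.succ)), ∑ b ∈ Finset.piAntidiag univ (∑ i, a i),
          C (∏ j, w j (k j)) * ((Nat.multinomial univ b : MvPolynomial (Fin (n + 1)) ℝ) *
          (C (∏ j : Fin n, t j (k j) ^ b j.succ) * ∏ j : Fin (n + 1), X j ^ b j)) := by
        refine Finset.sum_congr rfl fun k _ => ?_
        rw [expand k, Finset.mul_sum]
    _ = ∑ b ∈ Finset.piAntidiag univ (∑ i, a i), ∑ k : (∀ i : Fin n, Fin (a 0 + a i.succ)),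
          C (∏ j, w j (k j)) * ((Nat.multinomial univ b : MvPolynomial (Fin (n + 1)) ℝ) *
          (C (∏ j : Fin n, t j (k j) ^ b j.succ) * ∏ j : Fin (n + 1), X j ^ b j)) :=
        Finset.sum_comm
    _ = ∑ b ∈ Finset.piAntidiag univ (∑ i, a i),
          (Nat.multinomial univ b : MvPolynomial (Fin (n + 1)) ℝ) *
          C (∏ j : Fin n, ∑ kj, w j kj * t j kj ^ b j.succ) * ∏ j : Fin (n + 1), X j ^ b j := by
        refine Finset.sum_congr rfl fun b _ => ?_
        have hterm : ∀ k : (∀ i : Fin n, Fin (a 0 + a i.succ)),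
            C (∏ j, w j (k j)) * ((Nat.multinomial univ b : MvPolynomial (Fin (n + 1)) ℝ) *
              (C (∏ j : Fin n, t j (k j) ^ b j.succ) * ∏ j : Fin (n + 1), X j ^ b j))
            = (Nat.multinomial univ b : MvPolynomial (Fin (n + 1)) ℝ) *
              C (∏ j : Fin n, w j (k j) * t j (k j) ^ b j.succ) * ∏ j : Fin (n + 1), X j ^ b j := by
          intro k
          rw [Finset.prod_mul_distrib, map_mul]
          ring
        rw [Finset.sum_congr rfl fun k _ => hterm k]
        rw [← Finset.sum_mul, ← Finset.mul_sum, ← map_sum]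
        congr 2
        rw [Finset.prod_univ_sum]
        rw [Fintype.piFinset_univ]
    _ = C ((Nat.multinomial univ a : ℝ)) * ∏ i : Fin (n + 1), X i ^ a i := by
        have ha_mem : a ∈ Finset.piAntidiag univ (∑ i, a i) := by
          rw [Finset.mem_piAntidiag]
          exact ⟨rfl, fun i _ => mem_univ i⟩
        rw [Finset.sum_eq_single_of_mem a ha_mem]
        · have hone : (∏ j : Fin n, ∑ kj, w j kj * t j kj ^ a j.succ) = 1 := by
            refine Finset.prod_eq_one fun j _ => ?_
            rw [hw j _ (Nat.le_add_left _ _), if_pos rfl]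
          rw [hone, map_one, mul_one]
          rw [← map_natCast (C : ℝ →+* MvPolynomial (Fin (n + 1)) ℝ)]
        · intro b hb hbne
          rw [Finset.mem_piAntidiag] at hb
          obtain ⟨hbsum, -⟩ := hb
          have hkey : b 0 + ∑ j : Fin n, b j.succ = a 0 + ∑ j : Fin n, a j.succ := by
            rw [← Fin.sum_univ_succ b, ← Fin.sum_univ_succ a]
            exact hbsum
          suffices hΦ : (∏ j : Fin n, ∑ kj, w j kj * t j kj ^ b j.succ) = 0 by
            rw [hΦ, map_zero, mul_zero, zero_mul]
          by_cases hex : ∃ j : Fin n, b j.succ ≤ a 0 + a j.succ ∧ b j.succ ≠ a j.succ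
          · obtain ⟨j, hj1, hj2⟩ := hex
            exact Finset.prod_eq_zero (mem_univ j) (by rw [hw j _ hj1, if_neg hj2])
          · exfalso
            push_neg at hex
            have hge : ∀ j : Fin n, a j.succ ≤ b j.succ := by
              intro j
              by_cases h : b j.succ ≤ a 0 + a j.succ
              · rw [hex j h]
              · omega
            by_cases hall : ∀ j : Fin n, b j.succ = a j.succ
            · apply hbne
              funext i
              have hsucc : ∑ j : Fin n, b j.succ = ∑ j : Fin n, a j.succ :=
                Finset.sum_congr rfl fun j _ => hall j
              have hb0 : b 0 = a 0 := by omega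
              induction i using Fin.cases with
              | zero => exact hb0
              | succ j => exact hall j
            · push_neg at hall
              obtain ⟨j0, hj0⟩ := hall
              have hbig : a 0 + a j0.succ < b j0.succ := by
                by_contra h
                exact hj0 (hex j0 (by omega))
              have h1 : ∑ j ∈ (univ : Finset (Fin n)).erase j0, a j.succ
                  ≤ ∑ j ∈ (univ : Finset (Fin n)).erase j0, b j.succ :=
                Finset.sum_le_sum fun j _ => hge j
              have h2 : b j0.succ + ∑ j ∈ (univ : Finset (Fin n)).erase j0, b j.succ
                  = ∑ j : Fin n, b j.succ :=
                Finset.add_sum_erase univ (fun j => b j.succ) (mem_univ j0)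
              have h3 : a j0.succ + ∑ j ∈ (univ : Finset (Fin n)).erase j0, a j.succ
                  = ∑ j : Fin n, a j.succ :=
                Finset.add_sum_erase univ (fun j => a j.succ) (mem_univ j0)
              omega

end AuxKeyIdentity

open MvPolynomial

/-- The Waring rank over `K` of a form `F` of degree `d`: the least number `s` of terms
in a decomposition `F = ∑ c_i L_i^d` with `c_i ∈ K` and `L_i` linear forms. -/
noncomputable def waringRank (K : Type*) [Field K] {n : ℕ} (d : ℕ)
    (F : MvPolynomial (Fin n) K) : ℕ :=
  sInf {s | ∃ (c : Fin s → K) (L : Fin s → Fin n → K),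
    F = ∑ i, C (c i) * (∑ j, C (L i j) * X j) ^ d}

/-- Upper bound on the real Waring rank of a monomial:
`rk_ℝ(x_0^{a_0}⋯x_n^{a_n}) ≤ (1/(2a_0)) ∏ (a_i + a_0)`, stated multiplicatively. -/
theorem stmt_4 (n : ℕ) (a : Fin (n + 1) → ℕ) (h0 : 0 < a 0) (hmono : Monotone a) :
    2 * a 0 * waringRank ℝ (∑ i, a i) (∏ i, (X i : MvPolynomial (Fin (n + 1)) ℝ) ^ a i)
      ≤ ∏ i, (a i + a 0) := by
  classical
  have hpos : ∀ i : Fin n, 1 ≤ a i.succ := fun i => h0.trans_le (hmono (Fin.zero_le _))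
  choose t w htinj hw using fun i : Fin n =>
    exists_weights (a 0 + a i.succ) (a i.succ) (hpos i) (by omega)
  set s := ∏ i : Fin n, (a 0 + a i.succ) with hs
  have hcard : Fintype.card (∀ i : Fin n, Fin (a 0 + a i.succ)) = s := by
    simp [Fintype.card_pi, hs]
  let e : Fin s ≃ (∀ i : Fin n, Fin (a 0 + a i.succ)) :=
    (Fintype.equivFinOfCardEq hcard).symm
  have hmult : (Nat.multinomial Finset.univ a : ℝ) ≠ 0 := by
    exact_mod_cast (Nat.multinomial_pos _ _).ne'
  have hrank : waringRank ℝ (∑ i, a i)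
      (∏ i, (X i : MvPolynomial (Fin (n + 1)) ℝ) ^ a i) ≤ s := by
    apply Nat.sInf_le
    refine ⟨fun i => (∏ j, w j (e i j)) / (Nat.multinomial Finset.univ a : ℝ),
      fun i => (Fin.cases 1 fun j' => t j' (e i j') : Fin (n + 1) → ℝ), ?_⟩
    have hk := key_identity n a t w hw
    calc ∏ i, (X i : MvPolynomial (Fin (n + 1)) ℝ) ^ a i
        = C ((Nat.multinomial Finset.univ a : ℝ))⁻¹ *
            (C ((Nat.multinomial Finset.univ a : ℝ)) *
              ∏ i, (X i : MvPolynomial (Fin (n + 1)) ℝ) ^ a i) := by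
          rw [← mul_assoc, ← map_mul, inv_mul_cancel₀ hmult, map_one, one_mul]
      _ = C ((Nat.multinomial Finset.univ a : ℝ))⁻¹ *
            ∑ k : (∀ i : Fin n, Fin (a 0 + a i.succ)), C (∏ j, w j (k j)) *
              (∑ j : Fin (n + 1),
                C ((Fin.cases 1 fun j' => t j' (k j') : Fin (n + 1) → ℝ) j) * X j)
                ^ (∑ i, a i) := by rw [hk]
      _ = ∑ k : (∀ i : Fin n, Fin (a 0 + a i.succ)),
            C ((∏ j, w j (k j)) / (Nat.multinomial Finset.univ a : ℝ)) *
              (∑ j : Fin (n + 1),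
                C ((Fin.cases 1 fun j' => t j' (k j') : Fin (n + 1) → ℝ) j) * X j)
                ^ (∑ i, a i) := by
          rw [Finset.mul_sum]
          refine Finset.sum_congr rfl fun k _ => ?_
          rw [← mul_assoc, ← map_mul, div_eq_inv_mul]
      _ = ∑ i : Fin s,
            C ((∏ j, w j (e i j)) / (Nat.multinomial Finset.univ a : ℝ)) *
              (∑ j : Fin (n + 1),
                C ((Fin.cases 1 fun j' => t j' (e i j') : Fin (n + 1) → ℝ) j) * X j)
                ^ (∑ i, a i) :=
          (Fintype.sum_equiv e _ _ fun i => rfl).symm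
  have hprod : ∏ i : Fin (n + 1), (a i + a 0) = 2 * a 0 * s := by
    rw [Fin.prod_univ_succ, hs]
    have h2 : a 0 + a 0 = 2 * a 0 := by ring
    rw [h2]
    congr 1
    exact Finset.prod_congr rfl fun i _ => add_comm _ _
  rw [hprod]
  exact mul_le_mul_right hrank (2 * a 0)
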